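/- If A and B are invertible square matrices of arbitrary (possibly different) sizes, then A ⋉ B is invertible and (A ⋉ B)^{-1} = B^{-1} ⋉ A^{-1}. -/

import Mathlib

open Matrix

/-- Row/left component of a lexicographic index in `Fin (a*b)`. -/
def fdiv {a b : ℕ} (k : Fin (a * b)) : Fin a :=
  ⟨(k : ℕ) / b, Nat.div_lt_of_lt_mul (Nat.mul_comm a b ▸ k.isLt)⟩

/-- Right component of a lexicographic index in `Fin (a*b)`. -/
def fmod {a b : ℕ} (k : Fin (a * b)) : Fin b :=
  ⟨(k : ℕ) % b, Nat.mod_lt _ (Nat.pos_of_ne_zero (by rintro rfl; exact absurd k.isLt (by simp)))⟩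

/-- Kronecker product of column vectors (lexicographic order of indices). -/
def vKron {m n : ℕ} (x : Fin m → ℝ) (y : Fin n → ℝ) : Fin (m * n) → ℝ :=
  fun k => x (fdiv k) * y (fmod k)

/-- Kronecker product of matrices, with `Fin`-indexed dimensions. -/
def mKron {m n p q : ℕ} (A : Matrix (Fin m) (Fin n) ℝ) (B : Matrix (Fin p) (Fin q) ℝ) :
    Matrix (Fin (m * p)) (Fin (n * q)) ℝ :=
  fun i j => A (fdiv i) (fdiv j) * B (fmod i) (fmod j)

/-- Semi-tensor product of matrices: A ⋉ B = (A ⊗ I_{t/n})(B ⊗ I_{t/p}), t = lcm n p. -/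
def stp {m n p q : ℕ} (A : Matrix (Fin m) (Fin n) ℝ) (B : Matrix (Fin p) (Fin q) ℝ) :
    Matrix (Fin (m * (Nat.lcm n p / n))) (Fin (q * (Nat.lcm n p / p))) ℝ :=
  mKron A (1 : Matrix (Fin (Nat.lcm n p / n)) (Fin (Nat.lcm n p / n)) ℝ) *
    (Matrix.reindex (finCongr (by
        rw [Nat.mul_div_cancel' (Nat.dvd_lcm_right n p),
          Nat.mul_div_cancel' (Nat.dvd_lcm_left n p)])) (Equiv.refl _)
      (mKron B (1 : Matrix (Fin (Nat.lcm n p / p)) (Fin (Nat.lcm n p / p)) ℝ)))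

/-- The swap matrix W_{[m,n]}: sends x ⊗ y to y ⊗ x. -/
def swapM (m n : ℕ) : Matrix (Fin (n * m)) (Fin (m * n)) ℝ :=
  fun i j => if (i : ℕ) = (fmod j : ℕ) * m + (fdiv j : ℕ) then 1 else 0

/-- Column-stacking vectorization of a matrix. -/
def vecc {m n : ℕ} (A : Matrix (Fin m) (Fin n) ℝ) : Fin (n * m) → ℝ :=
  fun k => A (fmod k) (fdiv k)

/-- Iterated Kronecker product of column vectors. -/
def kronD : (d : ℕ) → (n : Fin d → ℕ) → ((i : Fin d) → Fin (n i) → ℝ) → Fin (∏ i, n i) → ℝ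
  | 0, _, _ => fun _ => 1
  | d + 1, n, x => fun k =>
      vKron (x 0) (kronD d (fun i => n i.succ) (fun i => x i.succ))
        (Fin.cast (by rw [Fin.prod_univ_succ]) k)

/-- Lexicographic encoding of a multi-index into a single natural number. -/
def encode : (d : ℕ) → (n : Fin d → ℕ) → ((i : Fin d) → Fin (n i)) → ℕ
  | 0, _, _ => 0
  | d + 1, n, f =>
      (f 0 : ℕ) * (∏ i : Fin d, n i.succ) + encode d (fun i => n i.succ) (fun i => f i.succ)

theorem encode_lt : ∀ (d : ℕ) (n : Fin d → ℕ) (f : (i : Fin d) → Fin (n i)),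
    encode d n f < ∏ i, n i := by
  intro d
  induction d with
  | zero => intro n f; simp [encode]
  | succ d ih =>
    intro n f
    rw [Fin.prod_univ_succ]
    have h1 := ih (fun i => n i.succ) (fun i => f i.succ)
    have h2 := (f 0).isLt
    calc (f 0 : ℕ) * (∏ i : Fin d, n i.succ)
        + encode d (fun i => n i.succ) (fun i => f i.succ)
        < (f 0 : ℕ) * (∏ i : Fin d, n i.succ) + (∏ i : Fin d, n i.succ) :=
          Nat.add_lt_add_left h1 _
      _ = ((f 0 : ℕ) + 1) * (∏ i : Fin d, n i.succ) := by ring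
      _ ≤ n 0 * (∏ i : Fin d, n i.succ) := Nat.mul_le_mul_right _ h2

/-- The MDA projection map Ξ_i determined by the head multi-index e. -/
def proj (d : ℕ) (n : Fin d → ℕ) (e : (i : Fin d) → Fin (n i)) (i : Fin d)
    (x : Fin (∏ j, n j) → ℝ) : Fin (n i) → ℝ :=
  fun k => x ⟨encode d n (Function.update e i k), encode_lt d n _⟩

/-- A vector is monic if its first nonzero entry equals 1. -/
def Monic {N : ℕ} (v : Fin N → ℝ) : Prop :=
  ∃ e : Fin N, v e = 1 ∧ ∀ j : Fin N, j < e → v j = 0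


open Kronecker in
private lemma mKron_eq {m n p q : ℕ} (A : Matrix (Fin m) (Fin n) ℝ)
    (B : Matrix (Fin p) (Fin q) ℝ) :
    mKron A B = Matrix.reindex finProdFinEquiv finProdFinEquiv (A ⊗ₖ B) := rfl

open Kronecker in
/-- `A ⊗ I_a` embedded as an `l × l` matrix via `n * a = l`. -/
private def K {n a l : ℕ} (h : n * a = l) (A : Matrix (Fin n) (Fin n) ℝ) :
    Matrix (Fin l) (Fin l) ℝ :=
  Matrix.reindex (finProdFinEquiv.trans (finCongr h)) (finProdFinEquiv.trans (finCongr h))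
    (A ⊗ₖ (1 : Matrix (Fin a) (Fin a) ℝ))

private lemma K_irrel {n a a' l : ℕ} (h : n * a = l) (h' : n * a' = l)
    (A : Matrix (Fin n) (Fin n) ℝ) : K h A = K h' A := by
  rcases Nat.eq_zero_or_pos n with hn | hn
  · subst hn
    have : l = 0 := by omega
    subst this
    ext i j
    exact absurd i.isLt (by omega)
  · have : a = a' := by
      have := h.trans h'.symm
      exact Nat.eq_of_mul_eq_mul_left hn this
    subst this
    rfl

open Kronecker in
private lemma K_mul {n a l : ℕ} (h : n * a = l) (A A' : Matrix (Fin n) (Fin n) ℝ) :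
    K h A * K h A' = K h (A * A') := by
  unfold K
  rw [Matrix.reindex_apply, Matrix.reindex_apply, Matrix.reindex_apply,
    Matrix.submatrix_mul_equiv, ← Matrix.mul_kronecker_mul, Matrix.one_mul]

private lemma K_one {n a l : ℕ} (h : n * a = l) :
    K h (1 : Matrix (Fin n) (Fin n) ℝ) = 1 := by
  unfold K
  rw [Matrix.one_kronecker_one, Matrix.reindex_apply, Matrix.submatrix_one_equiv]

open Kronecker in
private lemma K_det {n a l : ℕ} (h : n * a = l) (A : Matrix (Fin n) (Fin n) ℝ)
    (hA : IsUnit A.det) : IsUnit (K h A).det := by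
  unfold K
  rw [Matrix.reindex_apply, Matrix.det_submatrix_equiv_self, Matrix.det_kronecker]
  simpa using hA.pow _

private lemma finCongr_trans_eq {x y z : ℕ} (h1 : x = y) (h2 : y = z) (h3 : x = z) :
    (finCongr h1).trans (finCongr h2) = finCongr h3 := by
  subst h1 h2; rfl

/-- The reindexed STP as a product of two `K`s. -/
private lemma stp_eq {n p l : ℕ} (A : Matrix (Fin n) (Fin n) ℝ) (B : Matrix (Fin p) (Fin p) ℝ)
    (h1 : n * (Nat.lcm n p / n) = l) (h2 : p * (Nat.lcm n p / p) = l) :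
    Matrix.reindex (finCongr h1) (finCongr h2) (stp A B) = K h1 A * K h2 B := by
  unfold stp
  rw [mKron_eq, mKron_eq]
  have hc : p * (Nat.lcm n p / p) = n * (Nat.lcm n p / n) := by
    rw [Nat.mul_div_cancel' (Nat.dvd_lcm_right n p),
      Nat.mul_div_cancel' (Nat.dvd_lcm_left n p)]
  rw [Matrix.reindex_apply, Matrix.reindex_apply, Matrix.reindex_apply, Matrix.reindex_apply,
    Matrix.submatrix_submatrix]
  erw [Matrix.submatrix_mul _ _ _ _ _ (finCongr h1).symm.bijective]
  unfold K
  rw [Matrix.reindex_apply, Matrix.reindex_apply, Matrix.submatrix_submatrix,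
    Matrix.submatrix_submatrix]
  rfl

/-- If A and B are invertible square matrices, then A ⋉ B is invertible and
(A ⋉ B)⁻¹ = B⁻¹ ⋉ A⁻¹ (both viewed as matrices of size lcm n p). -/
theorem stp_inv (n p : ℕ)
    (A : Matrix (Fin n) (Fin n) ℝ) (B : Matrix (Fin p) (Fin p) ℝ)
    (hA : IsUnit A.det) (hB : IsUnit B.det) :
    IsUnit
      (Matrix.reindex
        (finCongr (Nat.mul_div_cancel' (Nat.dvd_lcm_left n p)))
        (finCongr (Nat.mul_div_cancel' (Nat.dvd_lcm_right n p)))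
        (stp A B)) ∧
    (Matrix.reindex
        (finCongr (Nat.mul_div_cancel' (Nat.dvd_lcm_left n p)))
        (finCongr (Nat.mul_div_cancel' (Nat.dvd_lcm_right n p)))
        (stp A B))⁻¹ =
      Matrix.reindex
        (finCongr (by rw [Nat.mul_div_cancel' (Nat.dvd_lcm_left p n), Nat.lcm_comm] :
          p * (Nat.lcm p n / p) = Nat.lcm n p))
        (finCongr (by rw [Nat.mul_div_cancel' (Nat.dvd_lcm_right p n), Nat.lcm_comm] :
          n * (Nat.lcm p n / n) = Nat.lcm n p))
        (stp B⁻¹ A⁻¹) := by 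
  have h1 : n * (Nat.lcm n p / n) = Nat.lcm n p := Nat.mul_div_cancel' (Nat.dvd_lcm_left n p)
  have h2 : p * (Nat.lcm n p / p) = Nat.lcm n p := Nat.mul_div_cancel' (Nat.dvd_lcm_right n p)
  have g1 : p * (Nat.lcm p n / p) = Nat.lcm n p := by
    rw [Nat.mul_div_cancel' (Nat.dvd_lcm_left p n), Nat.lcm_comm]
  have g2 : n * (Nat.lcm p n / n) = Nat.lcm n p := by
    rw [Nat.mul_div_cancel' (Nat.dvd_lcm_right p n), Nat.lcm_comm]
  rw [stp_eq A B h1 h2, stp_eq B⁻¹ A⁻¹ g1 g2, K_irrel g1 h2, K_irrel g2 h1]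
  have hmul : (K h1 A * K h2 B) * (K h2 B⁻¹ * K h1 A⁻¹) = 1 := by
    rw [mul_assoc, ← mul_assoc (K h2 B), K_mul, Matrix.mul_nonsing_inv _ hB, K_one, one_mul,
      K_mul, Matrix.mul_nonsing_inv _ hA, K_one]
  have hdet : IsUnit (K h1 A * K h2 B).det := by
    rw [Matrix.det_mul]
    exact (K_det h1 A hA).mul (K_det h2 B hB)
  exact ⟨(Matrix.isUnit_iff_isUnit_det _).mpr hdet, Matrix.inv_eq_right_inv hmul⟩
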